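/- Fix σ > 0 and d ≥ 0, and define F : [0, ∞) → ℝ by F(x) = x·(σ⁴ + x·d²)/(σ² + x)². If 2d² ≥ σ², then F is strictly increasing on [0, ∞). If 2d² < σ², then F is strictly increasing on [0, σ⁴/(σ² − 2d²)] and strictly decreasing on [σ⁴/(σ² − 2d²), ∞). Moreover F(0) = 0 and F(x) → d² as x → ∞. -/

import Mathlib

/-- Monotonicity properties of the fidelity error `F(x) = x(σ⁴ + x d²)/(σ² + x)²`
as a function of the signal noise variance `x`: if `2d² ≥ σ²` it is strictly
increasing on `[0, ∞)`; if `2d² < σ²` it is strictly increasing on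
`[0, σ⁴/(σ² − 2d²)]` and strictly decreasing on `[σ⁴/(σ² − 2d²), ∞)`.
Moreover `F(0) = 0` and `F(x) → d²` as `x → ∞`. -/
theorem fidelity_error_monotonicity (σ d : ℝ) (hσ : 0 < σ) (hd : 0 ≤ d)
    (F : ℝ → ℝ) (hF : ∀ x, F x = x * (σ ^ 4 + x * d ^ 2) / (σ ^ 2 + x) ^ 2) :
    (2 * d ^ 2 ≥ σ ^ 2 → StrictMonoOn F (Set.Ici 0)) ∧
    (2 * d ^ 2 < σ ^ 2 →
      StrictMonoOn F (Set.Icc 0 (σ ^ 4 / (σ ^ 2 - 2 * d ^ 2))) ∧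
      StrictAntiOn F (Set.Ici (σ ^ 4 / (σ ^ 2 - 2 * d ^ 2)))) ∧
    F 0 = 0 ∧
    Filter.Tendsto F Filter.atTop (nhds (d ^ 2)) := by
  have hσ2 : 0 < σ ^ 2 := by positivity
  have hder : ∀ x : ℝ, 0 ≤ x →
      HasDerivAt F (σ ^ 2 * (σ ^ 4 + (2 * d ^ 2 - σ ^ 2) * x) / (σ ^ 2 + x) ^ 3) x := by
    intro x hx
    have hne : (σ ^ 2 + x) ≠ 0 := by positivity
    have h1 : HasDerivAt (fun x : ℝ => x * (σ ^ 4 + x * d ^ 2))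
        (1 * (σ ^ 4 + x * d ^ 2) + x * (0 + 1 * d ^ 2)) x := by
      exact (hasDerivAt_id x).mul (((hasDerivAt_const x (σ^4)).add
        ((hasDerivAt_id x).mul_const (d^2))))
    have h2 : HasDerivAt (fun x : ℝ => (σ ^ 2 + x) ^ 2)
        (2 * (σ ^ 2 + x) ^ 1 * 1) x :=
      ((hasDerivAt_id x).const_add (σ^2)).pow 2
    have h3 := h1.div h2 (by positivity)
    have heq : ((fun x => x * (σ ^ 4 + x * d ^ 2)) / (fun x => (σ ^ 2 + x) ^ 2)) = F := by
      funext y; simp only [Pi.div_apply]; rw [hF y]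
    rw [heq] at h3
    refine h3.congr_deriv ?_
    rw [div_eq_div_iff (by positivity) (by positivity)]
    ring
  have hcont : ∀ x : ℝ, 0 ≤ x → ContinuousAt F x := fun x hx => (hder x hx).continuousAt
  have hderiv : ∀ x : ℝ, 0 ≤ x →
      deriv F x = σ ^ 2 * (σ ^ 4 + (2 * d ^ 2 - σ ^ 2) * x) / (σ ^ 2 + x) ^ 3 :=
    fun x hx => (hder x hx).deriv
  refine ⟨?_, ?_, ?_, ?_⟩
  · intro hge
    apply strictMonoOn_of_deriv_pos (convex_Ici 0)
    · exact fun x hx => (hcont x hx).continuousWithinAt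
    · intro x hx
      rw [interior_Ici] at hx
      have hx0 : (0:ℝ) < x := hx
      rw [hderiv x hx.le]
      have h1 : 0 < σ ^ 4 + (2 * d ^ 2 - σ ^ 2) * x := by nlinarith [hx0.le]
      exact div_pos (mul_pos hσ2 h1) (by positivity)
  · intro hlt
    set c := σ ^ 2 - 2 * d ^ 2 with hc
    have hcpos : 0 < c := by linarith
    have hxstar : 0 < σ ^ 4 / c := by positivity
    constructor
    · apply strictMonoOn_of_deriv_pos (convex_Icc _ _)
      · intro x hx; exact (hcont x hx.1).continuousWithinAt
      · intro x hx
        rw [interior_Icc] at hx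
        have hx0 : (0:ℝ) < x := hx.1
        rw [hderiv x hx.1.le]
        have h2 : x * c < σ ^ 4 := (lt_div_iff₀ hcpos).mp hx.2
        have hcc : (2 * d ^ 2 - σ ^ 2) * x = -(x * c) := by rw [hc]; ring
        have h1 : 0 < σ ^ 4 + (2 * d ^ 2 - σ ^ 2) * x := by rw [hcc]; linarith
        exact div_pos (mul_pos hσ2 h1) (by positivity)
    · apply strictAntiOn_of_deriv_neg (convex_Ici _)
      · intro x hx; exact (hcont x (le_trans hxstar.le hx)).continuousWithinAt
      · intro x hx
        rw [interior_Ici] at hx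
        have hx0 : (0:ℝ) ≤ x := le_trans hxstar.le hx.le
        rw [hderiv x hx0]
        have h2 : σ ^ 4 < x * c := (div_lt_iff₀ hcpos).mp hx
        have hcc : (2 * d ^ 2 - σ ^ 2) * x = -(x * c) := by rw [hc]; ring
        have h1 : σ ^ 2 * (σ ^ 4 + (2 * d ^ 2 - σ ^ 2) * x) < 0 := by
          apply mul_neg_of_pos_of_neg hσ2
          rw [hcc]; linarith
        exact div_neg_of_neg_of_pos h1 (by positivity)
  · rw [hF 0]; simp
  · have hg : Filter.Tendsto (fun x : ℝ => (σ ^ 4 / x + d ^ 2) / (σ ^ 2 / x + 1) ^ 2)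
        Filter.atTop (nhds (d ^ 2)) := by
      have h1 : Filter.Tendsto (fun x : ℝ => σ ^ 4 / x) Filter.atTop (nhds 0) :=
        tendsto_const_nhds.div_atTop Filter.tendsto_id
      have h2 : Filter.Tendsto (fun x : ℝ => σ ^ 2 / x) Filter.atTop (nhds 0) :=
        tendsto_const_nhds.div_atTop Filter.tendsto_id
      have := Filter.Tendsto.div (h1.add (tendsto_const_nhds (x := d ^ 2)))
        ((h2.add (tendsto_const_nhds (x := (1:ℝ)))).pow 2)
        (by norm_num : ((0:ℝ) + 1) ^ 2 ≠ 0)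
      simpa [Pi.div_def] using this
    refine hg.congr' ?_
    filter_upwards [Filter.eventually_gt_atTop 0] with x hx
    rw [hF x]
    have hxne : x ≠ 0 := hx.ne'
    have hne : (σ ^ 2 + x) ≠ 0 := by positivity
    field_simp
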